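/- Constrained Brockett minimization: let Q ∈ ℝ^{m×m} be symmetric with Q·1 = 0, and Λ = diag(λ₁,…,λ_d) with λ₁ ≥ … ≥ λ_d ≥ 0, d < m. Then the minimum of tr(Xᵀ·Q·X·Λ) subject to Xᵀ·X = I and Xᵀ·1 = 0 equals the minimum of tr(Xᵀ·(Q + n·1·1ᵀ)·X·Λ) subject only to Xᵀ·X = I, for any n > (σ₁ − σ_m)/m where σ₁, σ_m are the largest and smallest eigenvalues of Q. -/

import Mathlib

open Matrix Finset

lemma abel_ineq (x y : ℕ → ℝ) : ∀ (N : ℕ) (f : ℕ → ℝ),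
    (∀ k l, k ≤ l → l < N → f l ≤ f k) → (∀ k, k < N → 0 ≤ f k) →
    (∀ r, r < N → ∑ k ∈ range (r+1), y k ≤ ∑ k ∈ range (r+1), x k) →
    ∑ k ∈ range N, f k * y k ≤ ∑ k ∈ range N, f k * x k := by
  intro N
  induction N with
  | zero => intro f _ _ _; simp
  | succ N ih =>
    intro f hf hf0 hxy
    have key : ∀ z : ℕ → ℝ, ∑ k ∈ range (N+1), f k * z k
        = (∑ k ∈ range N, (f k - f N) * z k) + f N * ∑ k ∈ range (N+1), z k := by
      intro z
      rw [Finset.sum_range_succ, Finset.sum_range_succ (f := z), mul_add,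
        Finset.mul_sum, ← add_assoc, ← Finset.sum_add_distrib]
      rw [Finset.sum_congr rfl (fun k _ => by ring :
        ∀ k ∈ range N, (f k - f N) * z k + f N * z k = f k * z k)]
    rw [key x, key y]
    have h1 : ∑ k ∈ range N, (f k - f N) * y k ≤ ∑ k ∈ range N, (f k - f N) * x k := by
      apply ih
      · intro k l hkl hl; have := hf k l hkl (by omega); linarith
      · intro k hk; have := hf k N (by omega) (by omega); linarith
      · intro r hr; exact hxy r (by omega)
    have h2 : f N * ∑ k ∈ range (N+1), y k ≤ f N * ∑ k ∈ range (N+1), x k :=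
      mul_le_mul_of_nonneg_left (hxy N (by omega)) (hf0 N (by omega))
    linarith

lemma dot_lb {m : ℕ} (D q : Fin m → ℝ) (S : Finset (Fin m)) (t : ℝ)
    (hq0 : ∀ i, 0 ≤ q i) (hq1 : ∀ i, q i ≤ 1)
    (hD1 : ∀ i ∈ S, D i ≤ t) (hD0 : ∀ i ∉ S, q i = 0 ∨ t ≤ D i)
    (hsum : ∑ i, q i = S.card) :
    ∑ i ∈ S, D i ≤ ∑ i, D i * q i := by
  have key : ∀ i : Fin m, 0 ≤ (D i - t) * (q i - if i ∈ S then 1 else 0) := by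
    intro i
    by_cases hi : i ∈ S
    · simp only [hi, if_pos]
      have := hD1 i hi; have := hq1 i
      nlinarith
    · simp only [hi, if_neg, not_false_iff]
      rcases hD0 i hi with h | h
      · simp [h]
      · have := hq0 i; nlinarith
  have h0 : 0 ≤ ∑ i, (D i - t) * (q i - if i ∈ S then 1 else 0) :=
    Finset.sum_nonneg (fun i _ => key i)
  have expand : ∑ i, (D i - t) * (q i - if i ∈ S then 1 else 0)
      = ∑ i, D i * q i - ∑ i ∈ S, D i - t * (∑ i, q i) + t * S.card := by
    have h1 : ∑ i, D i * (if i ∈ S then (1:ℝ) else 0) = ∑ i ∈ S, D i := by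
      simp [mul_ite, Finset.sum_ite_mem]
    have h2 : ∑ i, (if i ∈ S then (1:ℝ) else 0) = S.card := by
      simp [Finset.sum_ite_mem]
    have : ∀ i : Fin m, (D i - t) * (q i - if i ∈ S then 1 else 0)
        = D i * q i - D i * (if i ∈ S then 1 else 0) - t * q i + t * (if i ∈ S then 1 else 0) := by
      intro i; ring
    rw [Finset.sum_congr rfl (fun i _ => this i)]
    rw [Finset.sum_add_distrib, Finset.sum_sub_distrib, Finset.sum_sub_distrib, h1,
      ← Finset.mul_sum, ← Finset.mul_sum, h2]
  rw [expand, hsum] at h0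
  linarith

lemma trace_form {m d : ℕ} (dd : Fin m → ℝ) (lam : Fin d → ℝ) (Y : Matrix (Fin m) (Fin d) ℝ) :
    (Yᵀ * Matrix.diagonal dd * Y * Matrix.diagonal lam).trace
      = ∑ k, lam k * ∑ i, dd i * Y i k ^ 2 := by
  have hA : ∀ k k' : Fin d, (Yᵀ * Matrix.diagonal dd * Y) k k' = ∑ i, dd i * (Y i k * Y i k') := by
    intro k k'
    rw [Matrix.mul_apply]
    refine Finset.sum_congr rfl fun i _ => ?_
    rw [Matrix.mul_diagonal, Matrix.transpose_apply]
    ring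
  rw [Matrix.trace]
  refine Finset.sum_congr rfl fun k _ => ?_
  rw [Matrix.diag_apply, Matrix.mul_diagonal, hA, Finset.sum_mul, Finset.mul_sum]
  refine Finset.sum_congr rfl fun i _ => ?_
  ring

lemma col_sq {m d : ℕ} (Y : Matrix (Fin m) (Fin d) ℝ) (hY : Yᵀ * Y = 1) (k : Fin d) :
    ∑ i, Y i k ^ 2 = 1 := by
  have := congrFun (congrFun hY k) k
  simp only [Matrix.mul_apply, Matrix.transpose_apply, Matrix.one_apply_eq] at this
  rw [← this]
  apply Finset.sum_congr rfl; intro i _; ring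

lemma row_sq {m d : ℕ} (Y : Matrix (Fin m) (Fin d) ℝ) (hY : Yᵀ * Y = 1) (i : Fin m) :
    ∑ k, Y i k ^ 2 ≤ 1 := by
  set M := Y * Yᵀ with hM
  have hMsymm : ∀ a b, M a b = M b a := by
    intro a b; simp [hM, Matrix.mul_apply, mul_comm]
  have hM2 : M * M = M := by
    rw [hM, Matrix.mul_assoc, ← Matrix.mul_assoc Yᵀ, hY, Matrix.one_mul]
  have hdiag : M i i = ∑ k, Y i k ^ 2 := by
    simp [hM, Matrix.mul_apply]
    apply Finset.sum_congr rfl; intro k _; ring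
  have h1 : M i i = ∑ j, M i j ^ 2 := by
    conv_lhs => rw [← hM2]
    simp only [Matrix.mul_apply]
    apply Finset.sum_congr rfl; intro j _
    rw [hMsymm j i]; ring
  have h2 : M i i ^ 2 ≤ ∑ j, M i j ^ 2 := by
    apply Finset.single_le_sum (f := fun j => M i j ^ 2)
    · intro j _; positivity
    · exact Finset.mem_univ i
  rw [← hdiag]
  nlinarith [h1, h2]

set_option maxHeartbeats 1600000 in
theorem stmt13 (m d : ℕ) (hd : d < m) (Q U : Matrix (Fin m) (Fin m) ℝ)
    (hQsymm : Qᵀ = Q) (hQ1 : Q *ᵥ (fun _ => (1 : ℝ)) = 0)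
    (σ : Fin m → ℝ) (hσ : Antitone σ) (hU : Uᵀ * U = 1)
    (hQ : Q = U * Matrix.diagonal σ * Uᵀ)
    (lam : Fin d → ℝ) (hlam : Antitone lam) (hlam0 : ∀ k, 0 ≤ lam k)
    (n : ℝ)
    (hn : (σ (⟨0, by omega⟩ : Fin m) - σ (⟨m - 1, by omega⟩ : Fin m)) / m < n) :
    sInf {v : ℝ | ∃ X : Matrix (Fin m) (Fin d) ℝ, Xᵀ * X = 1 ∧
        Xᵀ *ᵥ (fun _ => (1 : ℝ)) = 0 ∧
        v = (Xᵀ * Q * X * Matrix.diagonal lam).trace}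
      = sInf {v : ℝ | ∃ X : Matrix (Fin m) (Fin d) ℝ, Xᵀ * X = 1 ∧
          v = (Xᵀ * (Q + n • Matrix.vecMulVec (fun _ => (1 : ℝ)) (fun _ => (1 : ℝ)))
              * X * Matrix.diagonal lam).trace} := by
  have hm : 0 < m := Nat.lt_of_le_of_lt (Nat.zero_le d) hd
  have hm' : (0:ℝ) < (m:ℝ) := by exact_mod_cast hm
  set one : Fin m → ℝ := fun _ => (1:ℝ) with hone
  have hUU' : U * Uᵀ = 1 := mul_eq_one_comm.mp hU
  set c : Fin m → ℝ := Uᵀ *ᵥ one with hc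
  have hUc : U *ᵥ c = one := by
    rw [hc, Matrix.mulVec_mulVec, hUU', Matrix.one_mulVec]
  have hcc : (∑ i, c i * c i) = m := by
    have h1 : c ⬝ᵥ c = one ⬝ᵥ one := by
      rw [hc, Matrix.dotProduct_mulVec, Matrix.vecMul_transpose,
        Matrix.mulVec_mulVec, hUU', Matrix.one_mulVec]
    have h2 : one ⬝ᵥ one = (m:ℝ) := by
      simp [hone, dotProduct]
    rw [← h2, ← h1]; rfl
  have hσc : ∀ i, σ i * c i = 0 := by
    have h1 : U *ᵥ (fun i => σ i * c i) = 0 := by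
      have h2 : Q *ᵥ one = U *ᵥ (fun i => σ i * c i) := by
        have hdc : Matrix.diagonal σ *ᵥ (Uᵀ *ᵥ one) = fun i => σ i * c i := by
          funext i
          rw [Matrix.mulVec_diagonal]
        rw [hQ, ← Matrix.mulVec_mulVec, ← Matrix.mulVec_mulVec, hdc]
      rw [← h2, hQ1]
    have h3 : Uᵀ *ᵥ (U *ᵥ (fun i => σ i * c i)) = 0 := by rw [h1, Matrix.mulVec_zero]
    rw [Matrix.mulVec_mulVec, hU, Matrix.one_mulVec] at h3
    intro i; exact congrFun h3 i
  obtain ⟨i₀, hi₀c⟩ : ∃ i, c i ≠ 0 := by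
    by_contra h
    push_neg at h
    have h0 : (∑ i, c i * c i) = 0 := by
      apply Finset.sum_eq_zero; intro i _; rw [h i, mul_zero]
    rw [hcc] at h0
    exact absurd h0 (by positivity)
  have hσi₀ : σ i₀ = 0 := by
    rcases mul_eq_zero.mp (hσc i₀) with h | h
    · exact h
    · exact absurd h hi₀c
  -- the Householder reflection
  set s : ℝ := Real.sqrt m with hsdef
  have hs0 : 0 < s := Real.sqrt_pos.mpr hm'
  have hs2 : s * s = (m:ℝ) := Real.mul_self_sqrt (le_of_lt hm')
  have hsne : s ≠ 0 := ne_of_gt hs0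
  set ε : ℝ := if 0 ≤ c i₀ then 1 else -1 with hεdef
  have hε2 : ε * ε = 1 := by rw [hεdef]; split_ifs <;> norm_num
  have hεc : 0 < ε * c i₀ := by
    rw [hεdef]; split_ifs with h
    · rcases lt_or_eq_of_le h with h' | h'
      · linarith
      · exact absurd h'.symm hi₀c
    · push_neg at h; nlinarith
  set e0 : Fin m → ℝ := fun i => if i = i₀ then 1 else 0 with he0
  set u : Fin m → ℝ := fun i => c i + (ε * s) * e0 i with hu
  have hσu : ∀ i, σ i * u i = 0 := by
    intro i
    by_cases hi : i = i₀
    · subst hi; simp [hu, hσi₀]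
    · simp [hu, he0, hi, hσc i]
  have hui₀ : u i₀ = ε * (s + ε * c i₀) := by
    have h1 : u i₀ = c i₀ + ε * s := by simp [hu, he0]
    rw [h1]
    linear_combination (- c i₀) * hε2
  set ρ : ℝ := ∑ i, u i * u i with hρdef
  have hρ : ρ = 2 * s * (s + ε * c i₀) := by
    rw [hρdef]
    have expand : ∀ i : Fin m, u i * u i
        = c i * c i + (2*ε*s) * (e0 i * c i) + (ε*ε)*(s*s)*(e0 i * e0 i) := by
      intro i; simp only [hu]; ring
    rw [Finset.sum_congr rfl fun i _ => expand i, Finset.sum_add_distrib,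
      Finset.sum_add_distrib, ← Finset.mul_sum, ← Finset.mul_sum]
    have h1 : ∑ i, e0 i * c i = c i₀ := by simp [he0]
    have h2 : ∑ i, e0 i * e0 i = 1 := by simp [he0, ite_mul]
    rw [h1, h2, hcc, ← hs2]
    linear_combination (s*s) * hε2
  have hρ0 : 0 < ρ := by rw [hρ]; nlinarith [hεc, hs0]
  have hρne : ρ ≠ 0 := ne_of_gt hρ0
  set M : Matrix (Fin m) (Fin m) ℝ := Matrix.vecMulVec u u with hM
  have hMT : Mᵀ = M := by
    ext i j; simp [hM, Matrix.vecMulVec_apply, mul_comm]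
  have hMM : M * M = ρ • M := by
    ext i j
    simp only [hM, Matrix.mul_apply, Matrix.vecMulVec_apply, Matrix.smul_apply,
      smul_eq_mul]
    rw [hρdef, Finset.sum_mul]
    apply Finset.sum_congr rfl
    intro k _; ring
  set H : Matrix (Fin m) (Fin m) ℝ := 1 - (2/ρ) • M with hH
  have hHT : Hᵀ = H := by
    rw [hH, Matrix.transpose_sub, Matrix.transpose_one, Matrix.transpose_smul, hMT]
  have hHH : H * H = 1 := by
    have e2 : ((2/ρ) • M) * ((2/ρ) • M) = ((2/ρ) * (2/ρ) * ρ) • M := by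
      rw [smul_mul_assoc, mul_smul_comm, hMM, smul_smul, smul_smul]
    rw [hH, Matrix.sub_mul, Matrix.one_mul, Matrix.mul_sub, Matrix.mul_one, e2]
    have h4 : (2/ρ) * (2/ρ) * ρ = 2/ρ + 2/ρ := by field_simp; ring
    rw [h4, add_smul]
    abel
  have hMD : M * Matrix.diagonal σ = 0 := by
    ext i j
    simp only [Matrix.mul_diagonal, hM, Matrix.vecMulVec_apply, Matrix.zero_apply]
    linear_combination (u i) * hσu j
  have hDM : Matrix.diagonal σ * M = 0 := by
    ext i j
    simp only [Matrix.diagonal_mul, hM, Matrix.vecMulVec_apply, Matrix.zero_apply]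
    linear_combination (u j) * hσu i
  have hHDH : H * Matrix.diagonal σ * H = Matrix.diagonal σ := by
    rw [hH, Matrix.sub_mul, Matrix.one_mul, smul_mul_assoc, hMD, smul_zero,
      sub_zero, Matrix.mul_sub, Matrix.mul_one, mul_smul_comm, hDM, smul_zero,
      sub_zero]
  have hHcol : ∀ k, H k i₀ = -(ε/s) * c k := by
    intro k
    have hA : (2/ρ) * u i₀ = ε/s := by
      rw [hρ, hui₀]
      have hne : s + ε * c i₀ ≠ 0 := by nlinarith [hεc, hs0]
      field_simp
    have h1 : H k i₀ = (if k = i₀ then 1 else 0) - u k * ((2/ρ) * u i₀) := by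
      simp only [hH, Matrix.sub_apply, Matrix.one_apply, Matrix.smul_apply, hM,
        Matrix.vecMulVec_apply, smul_eq_mul]
      ring
    rw [h1, hA]
    simp only [hu, he0]
    by_cases hk : k = i₀
    · simp only [if_pos hk]
      field_simp
      linear_combination (-s) * hε2
    · simp only [if_neg hk]
      ring
  set V : Matrix (Fin m) (Fin m) ℝ := U * H with hV
  have hVV : Vᵀ * V = 1 := by
    rw [hV, Matrix.transpose_mul, hHT, Matrix.mul_assoc, ← Matrix.mul_assoc Uᵀ,
      hU, Matrix.one_mul, hHH]
  have hVV' : V * Vᵀ = 1 := mul_eq_one_comm.mp hVV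
  have hQV : Q = V * Matrix.diagonal σ * Vᵀ := by
    rw [hV, Matrix.transpose_mul, hHT]
    calc Q = U * Matrix.diagonal σ * Uᵀ := hQ
      _ = U * (H * Matrix.diagonal σ * H) * Uᵀ := by rw [hHDH]
      _ = U * H * Matrix.diagonal σ * (H * Uᵀ) := by simp only [Matrix.mul_assoc]
  have hVcol : ∀ j, V j i₀ = -(ε/s) := by
    intro j
    have h1 : V j i₀ = ∑ k, U j k * H k i₀ := by rw [hV, Matrix.mul_apply]
    rw [h1]
    have h2 : ∀ k, U j k * H k i₀ = -(ε/s) * (U j k * c k) := by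
      intro k; rw [hHcol]; ring
    rw [Finset.sum_congr rfl fun k _ => h2 k, ← Finset.mul_sum]
    have h3 : ∑ k, U j k * c k = 1 := by
      have h4 := congrFun hUc j
      simpa [Matrix.mulVec, dotProduct, hone] using h4
    rw [h3, mul_one]
  have hDot : ∑ j, u j * c j = s * (s + ε * c i₀) := by
    have expand : ∀ j : Fin m, u j * c j = c j * c j + (ε*s) * (e0 j * c j) := by
      intro j; simp only [hu]; ring
    rw [Finset.sum_congr rfl fun j _ => expand j, Finset.sum_add_distrib,
      ← Finset.mul_sum]
    have h1 : ∑ j, e0 j * c j = c i₀ := by simp [he0]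
    rw [h1, hcc, ← hs2]; ring
  have hne' : s + ε * c i₀ ≠ 0 := by nlinarith [hεc, hs0]
  have hV1 : Vᵀ *ᵥ one = fun k => -(ε*s) * e0 k := by
    have hHc : ∀ k, (H *ᵥ c) k = -(ε*s) * e0 k := by
      intro k
      have h1 : (H *ᵥ c) k
          = (∑ j, (if k = j then (1:ℝ) else 0) * c j)
            - u k * ((2/ρ) * (∑ j, u j * c j)) := by
        calc (H *ᵥ c) k
            = ∑ j, ((if k = j then (1:ℝ) else 0) * c j
                - u k * ((2/ρ) * (u j * c j))) := by
              simp only [Matrix.mulVec, dotProduct, hH, Matrix.sub_apply,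
                Matrix.one_apply, Matrix.smul_apply, hM, Matrix.vecMulVec_apply,
                smul_eq_mul]
              refine Finset.sum_congr rfl fun j _ => ?_
              ring
          _ = (∑ j, (if k = j then (1:ℝ) else 0) * c j)
              - ∑ j, u k * ((2/ρ) * (u j * c j)) := Finset.sum_sub_distrib _ _
          _ = (∑ j, (if k = j then (1:ℝ) else 0) * c j)
              - u k * ((2/ρ) * (∑ j, u j * c j)) := by
              rw [Finset.mul_sum, Finset.mul_sum]
      have h3 : (2/ρ) * (∑ j, u j * c j) = 1 := by
        rw [hDot, hρ]; field_simp
      rw [h1, h3, mul_one]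
      have h2 : ∑ j, (if k = j then (1:ℝ) else 0) * c j = c k := by
        simp
      rw [h2]
      simp only [hu]
      ring
    have hstep : Vᵀ *ᵥ one = H *ᵥ c := by
      rw [hV, Matrix.transpose_mul, hHT, ← Matrix.mulVec_mulVec]
    rw [hstep]; funext k; exact hHc k
  -- the diagonal for the shifted matrix
  set D : Fin m → ℝ := fun i => if i = i₀ then n * m else σ i with hD
  have hAV : Q + n • Matrix.vecMulVec one one = V * Matrix.diagonal D * Vᵀ := by
    have hsplit : Matrix.diagonal D
        = Matrix.diagonal σ + (n * m) • Matrix.diagonal e0 := by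
      ext i j
      simp only [Matrix.add_apply, Matrix.smul_apply, Matrix.diagonal_apply, hD,
        he0, smul_eq_mul]
      by_cases hij : i = j
      · subst hij
        by_cases hi : i = i₀ <;> simp [hi, hσi₀]
      · simp [hij]
    have hconj : V * Matrix.diagonal e0 * Vᵀ
        = (1/(m:ℝ)) • Matrix.vecMulVec one one := by
      ext i j
      have h1 : (V * Matrix.diagonal e0 * Vᵀ) i j
          = ∑ a, V i a * e0 a * V j a := by
        rw [Matrix.mul_apply]
        refine Finset.sum_congr rfl fun a _ => ?_
        rw [Matrix.mul_diagonal, Matrix.transpose_apply]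
      rw [h1]
      have h2 : ∀ a : Fin m, V i a * e0 a * V j a
          = if a = i₀ then V i i₀ * V j i₀ else 0 := by
        intro a
        simp only [he0]
        by_cases ha : a = i₀
        · subst ha; simp
        · simp [ha]
      rw [Finset.sum_congr rfl fun a _ => h2 a, Finset.sum_ite_eq']
      simp only [Finset.mem_univ, if_pos, Matrix.smul_apply,
        Matrix.vecMulVec_apply, hone, smul_eq_mul, hVcol]
      rw [← hs2]
      field_simp
      linear_combination hε2
    calc Q + n • Matrix.vecMulVec one one
        = V * Matrix.diagonal σ * Vᵀ
          + (n*m) • ((1/(m:ℝ)) • Matrix.vecMulVec one one) := by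
          rw [← hQV, smul_smul]
          have h5 : n * (m:ℝ) * (1/(m:ℝ)) = n := by field_simp
          rw [h5]
      _ = V * Matrix.diagonal σ * Vᵀ
          + (n*m) • (V * Matrix.diagonal e0 * Vᵀ) := by rw [hconj]
      _ = V * (Matrix.diagonal σ + (n*m) • Matrix.diagonal e0) * Vᵀ := by
          rw [Matrix.mul_add, Matrix.add_mul, mul_smul_comm, smul_mul_assoc]
      _ = V * Matrix.diagonal D * Vᵀ := by rw [hsplit]
  -- the index map picking the d smallest eigenvalues avoiding i₀
  set π : Fin d → Fin m := fun k =>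
    if (k:ℕ) < m - 1 - (i₀:ℕ) then ⟨m-1-(k:ℕ), by omega⟩
    else ⟨m-2-(k:ℕ), by omega⟩ with hπ
  have hπval : ∀ k : Fin d, (π k : ℕ)
      = if (k:ℕ) < m - 1 - (i₀:ℕ) then m-1-(k:ℕ) else m-2-(k:ℕ) := by
    intro k
    simp only [hπ]
    split_ifs <;> simp
  have hπne : ∀ k : Fin d, π k ≠ i₀ := by
    intro k hcon
    have h1 := hπval k
    have hk : (k:ℕ) < d := k.2
    have hi : (i₀:ℕ) < m := i₀.2
    rw [hcon] at h1
    split_ifs at h1 <;> omega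
  have hπlt : ∀ k l : Fin d, (k:ℕ) < (l:ℕ) → (π l : ℕ) < (π k : ℕ) := by
    intro k l hkl
    have h1 := hπval k
    have h2 := hπval l
    have hk : (k:ℕ) < d := k.2
    have hl : (l:ℕ) < d := l.2
    have hi : (i₀:ℕ) < m := i₀.2
    split_ifs at h1 h2 <;> omega
  have hπinj : Function.Injective π := by
    intro k l hkl
    rcases lt_trichotomy (k:ℕ) (l:ℕ) with h | h | h
    · have h2 := hπlt k l h; rw [hkl] at h2; omega
    · exact Fin.ext h
    · have h2 := hπlt l k h; rw [hkl] at h2; omega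
  have hπle : ∀ k l : Fin d, k ≤ l → π l ≤ π k := by
    intro k l hkl
    rcases eq_or_lt_of_le hkl with h | h
    · rw [h]
    · have h2 := hπlt k l h
      exact le_of_lt h2
  have hπtop : ∀ (r : Fin d) (j : Fin m), ((π r : ℕ) ≤ (j:ℕ)) → j ≠ i₀ →
      ∃ k : Fin d, (k:ℕ) ≤ (r:ℕ) ∧ π k = j := by
    intro r j hrj hji
    have h1 := hπval r
    have hr : (r:ℕ) < d := r.2
    have hi : (i₀:ℕ) < m := i₀.2
    have hj : (j:ℕ) < m := j.2
    have hji' : (j:ℕ) ≠ (i₀:ℕ) := fun h => hji (Fin.ext h)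
    by_cases hcase : (i₀:ℕ) < (j:ℕ)
    · have hkd : m - 1 - (j:ℕ) < d := by split_ifs at h1 <;> omega
      refine ⟨⟨m-1-(j:ℕ), hkd⟩, ?_, ?_⟩
      · show m - 1 - (j:ℕ) ≤ (r:ℕ)
        split_ifs at h1 <;> omega
      · apply Fin.ext
        rw [hπval]
        show (if (m-1-(j:ℕ)) < m - 1 - (i₀:ℕ) then m-1-(m-1-(j:ℕ))
          else m-2-(m-1-(j:ℕ))) = (j:ℕ)
        rw [if_pos (by omega)]
        omega
    · have hkd : m - 2 - (j:ℕ) < d := by split_ifs at h1 <;> omega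
      refine ⟨⟨m-2-(j:ℕ), hkd⟩, ?_, ?_⟩
      · show m - 2 - (j:ℕ) ≤ (r:ℕ)
        split_ifs at h1 <;> omega
      · apply Fin.ext
        rw [hπval]
        show (if (m-2-(j:ℕ)) < m - 1 - (i₀:ℕ) then m-1-(m-2-(j:ℕ))
          else m-2-(m-2-(j:ℕ))) = (j:ℕ)
        rw [if_neg (by omega)]
        omega
  have hn' : σ (⟨0, by omega⟩ : Fin m) - σ (⟨m - 1, by omega⟩ : Fin m) < n * m :=
    (div_lt_iff₀ hm').mp hn
  have hσlast : σ (⟨m - 1, by omega⟩ : Fin m) ≤ 0 := by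
    have h1 : i₀ ≤ (⟨m - 1, by omega⟩ : Fin m) := by
      rw [Fin.le_def]
      simp only
      omega
    have h2 := hσ h1
    rw [hσi₀] at h2
    exact h2
  have hσtop : ∀ j : Fin m, σ j ≤ n * m := by
    intro j
    have h1 : (⟨0, by omega⟩ : Fin m) ≤ j := by
      rw [Fin.le_def]
      simp only
      omega
    have h2 := hσ h1
    linarith
  -- the optimal value
  set B : ℝ := ∑ k : Fin d, lam k * σ (π k) with hB
  -- the core lower bound
  have hcore : ∀ (dd : Fin m → ℝ) (Y : Matrix (Fin m) (Fin d) ℝ),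
      Yᵀ * Y = 1 →
      (∀ j, j ≠ i₀ → dd j = σ j) →
      ((∀ k, Y i₀ k = 0) ∨ (∀ r : Fin d, σ (π r) ≤ dd i₀)) →
      B ≤ (Yᵀ * Matrix.diagonal dd * Y * Matrix.diagonal lam).trace := by
    intro dd Y hY hdd hi
    rw [trace_form]
    set f : ℕ → ℝ := fun k => if h : k < d then lam ⟨k,h⟩ else 0 with hf
    set a : ℕ → ℝ := fun k => if h : k < d then ∑ i, dd i * Y i ⟨k,h⟩^2 else 0
      with ha
    set b : ℕ → ℝ := fun k => if h : k < d then σ (π ⟨k,h⟩) else 0 with hb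
    have hconvB : B = ∑ k ∈ Finset.range d, f k * b k := by
      rw [hB, ← Fin.sum_univ_eq_sum_range (fun k => f k * b k) d]
      refine Finset.sum_congr rfl fun k _ => ?_
      simp only [hf, hb, dif_pos k.2, Fin.eta]
    have hconvA : (∑ k : Fin d, lam k * ∑ i, dd i * Y i k ^ 2)
        = ∑ k ∈ Finset.range d, f k * a k := by
      rw [← Fin.sum_univ_eq_sum_range (fun k => f k * a k) d]
      refine Finset.sum_congr rfl fun k _ => ?_
      simp only [hf, ha, dif_pos k.2, Fin.eta]
    rw [hconvB, hconvA]
    apply abel_ineq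
    · intro k l hkl hl
      simp only [hf]
      rw [dif_pos hl, dif_pos (lt_of_le_of_lt hkl hl)]
      exact hlam (show (⟨k, lt_of_le_of_lt hkl hl⟩ : Fin d) ≤ ⟨l, hl⟩ from hkl)
    · intro k hk
      simp only [hf, dif_pos hk]
      exact hlam0 _
    · intro r hr
      set π' : ℕ → Fin m := fun k => if h : k < d then π ⟨k,h⟩ else i₀ with hπ'
      set S : Finset (Fin m) := (Finset.range (r+1)).image π' with hS
      have hinj : ∀ x ∈ Finset.range (r+1), ∀ y ∈ Finset.range (r+1),
          π' x = π' y → x = y := by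
        intro x hx y hy hxy
        rw [Finset.mem_range] at hx hy
        have hxd : x < d := by omega
        have hyd : y < d := by omega
        simp only [hπ', dif_pos hxd, dif_pos hyd] at hxy
        have h2 := hπinj hxy
        exact congrArg Fin.val h2
      have hcard : S.card = r + 1 := by
        rw [hS, Finset.card_image_of_injOn, Finset.card_range]
        intro x hx y hy hxy
        exact hinj x (Finset.mem_coe.mp hx) y (Finset.mem_coe.mp hy) hxy
      set q : Fin m → ℝ :=
        fun i => ∑ k ∈ Finset.range (r+1), (if h : k < d then Y i ⟨k,h⟩^2 else 0)
        with hq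
      have hq0 : ∀ i, 0 ≤ q i := by
        intro i
        apply Finset.sum_nonneg
        intro k _
        by_cases h1 : k < d
        · rw [dif_pos h1]; positivity
        · rw [dif_neg h1]
      have hq1 : ∀ i, q i ≤ 1 := by
        intro i
        have step1 : q i ≤ ∑ k ∈ Finset.range d,
            (if h : k < d then Y i ⟨k,h⟩^2 else 0) := by
          apply Finset.sum_le_sum_of_subset_of_nonneg
          · exact Finset.range_subset_range.mpr (by omega)
          · intro k _ _
            by_cases h1 : k < d
            · rw [dif_pos h1]; positivity
            · rw [dif_neg h1]
        have step2 : (∑ k ∈ Finset.range d,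
            (if h : k < d then Y i ⟨k,h⟩^2 else 0)) = ∑ k : Fin d, Y i k ^ 2 := by
          rw [← Fin.sum_univ_eq_sum_range
            (fun k => if h : k < d then Y i ⟨k,h⟩^2 else 0) d]
          refine Finset.sum_congr rfl fun k _ => ?_
          simp only [dif_pos k.2, Fin.eta]
        calc q i ≤ _ := step1
          _ = ∑ k : Fin d, Y i k ^ 2 := step2
          _ ≤ 1 := row_sq Y hY i
      have hqsum : ∑ i, q i = (S.card : ℝ) := by
        rw [hcard, hq, Finset.sum_comm]
        have h1 : ∀ k ∈ Finset.range (r+1),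
            (∑ i, if h : k < d then Y i ⟨k,h⟩^2 else 0) = 1 := by
          intro k hk
          rw [Finset.mem_range] at hk
          have hkd : k < d := by omega
          simp only [dif_pos hkd]
          exact col_sq Y hY _
        rw [Finset.sum_congr rfl h1]
        simp
      have hD1 : ∀ i ∈ S, dd i ≤ σ (π ⟨r,hr⟩) := by
        intro i hiS
        rw [hS, Finset.mem_image] at hiS
        obtain ⟨k, hk, hπk⟩ := hiS
        rw [Finset.mem_range] at hk
        have hkd : k < d := by omega
        simp only [hπ', dif_pos hkd] at hπk
        rw [← hπk, hdd _ (hπne _)]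
        apply hσ
        exact hπle ⟨k, hkd⟩ ⟨r, hr⟩ (by exact Nat.lt_succ_iff.mp hk)
      have hD0 : ∀ i ∉ S, q i = 0 ∨ σ (π ⟨r,hr⟩) ≤ dd i := by
        intro i hiS
        by_cases hii : i = i₀
        · subst hii
          rcases hi with hrow | htop
          · left
            apply Finset.sum_eq_zero
            intro k _
            by_cases h1 : k < d
            · rw [dif_pos h1, hrow, zero_pow two_ne_zero]
            · rw [dif_neg h1]
          · right; exact htop ⟨r,hr⟩
        · right
          rw [hdd i hii]
          by_cases hge : (π ⟨r,hr⟩ : ℕ) ≤ (i:ℕ)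
          · obtain ⟨k, hk, hπk⟩ := hπtop ⟨r,hr⟩ i hge hii
            exfalso
            apply hiS
            rw [hS, Finset.mem_image]
            have hk' : (k:ℕ) ≤ r := hk
            refine ⟨(k:ℕ), Finset.mem_range.mpr (by omega), ?_⟩
            simp only [hπ', dif_pos k.2, Fin.eta]
            exact hπk
          · push_neg at hge
            apply hσ
            rw [Fin.le_def]
            omega
      have hmain := dot_lb dd q S (σ (π ⟨r,hr⟩)) hq0 hq1 hD1 hD0 hqsum
      have hL : ∑ i ∈ S, dd i = ∑ k ∈ Finset.range (r+1), b k := by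
        rw [hS, Finset.sum_image hinj]
        refine Finset.sum_congr rfl fun k hk => ?_
        rw [Finset.mem_range] at hk
        have hkd : k < d := by omega
        simp only [hπ', hb, dif_pos hkd]
        exact hdd _ (hπne _)
      have hR : ∑ i, dd i * q i = ∑ k ∈ Finset.range (r+1), a k := by
        simp only [hq, Finset.mul_sum]
        rw [Finset.sum_comm]
        refine Finset.sum_congr rfl fun k hk => ?_
        rw [Finset.mem_range] at hk
        have hkd : k < d := by omega
        simp only [ha, dif_pos hkd]
      calc ∑ k ∈ Finset.range (r+1), b k = ∑ i ∈ S, dd i := hL.symm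
        _ ≤ ∑ i, dd i * q i := hmain
        _ = ∑ k ∈ Finset.range (r+1), a k := hR
  -- the optimal matrix
  set E : Matrix (Fin m) (Fin d) ℝ :=
    Matrix.of fun i k => if i = π k then (1:ℝ) else 0 with hE
  have hEapp : ∀ i k, E i k = if i = π k then (1:ℝ) else 0 := fun i k => rfl
  have hEE : Eᵀ * E = 1 := by
    ext k l
    rw [Matrix.mul_apply]
    by_cases hkl : k = l
    · subst hkl
      rw [Matrix.one_apply_eq]
      have h1 : ∀ i : Fin m, Eᵀ k i * E i k = if i = π k then (1:ℝ) else 0 := by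
        intro i
        rw [Matrix.transpose_apply, hEapp]
        split_ifs <;> ring
      rw [Finset.sum_congr rfl fun i _ => h1 i]
      simp
    · rw [Matrix.one_apply_ne hkl]
      apply Finset.sum_eq_zero
      intro i _
      rw [Matrix.transpose_apply, hEapp, hEapp]
      by_cases h1 : i = π k
      · rw [if_pos h1, if_neg, mul_zero]
        rw [h1]
        intro hcon
        exact hkl (hπinj hcon)
      · rw [if_neg h1, zero_mul]
  have hEdiag : ∀ dd : Fin m → ℝ,
      (Eᵀ * Matrix.diagonal dd * E * Matrix.diagonal lam).trace
        = ∑ k, lam k * dd (π k) := by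
    intro dd
    rw [trace_form]
    refine Finset.sum_congr rfl fun k _ => ?_
    congr 1
    have h1 : ∀ i : Fin m, dd i * E i k ^ 2 = if i = π k then dd i else 0 := by
      intro i
      rw [hEapp]
      split_ifs <;> ring
    rw [Finset.sum_congr rfl fun i _ => h1 i]
    simp
  set X0 : Matrix (Fin m) (Fin d) ℝ := V * E with hX0
  have hX0X0 : X0ᵀ * X0 = 1 := by
    rw [hX0, Matrix.transpose_mul, Matrix.mul_assoc, ← Matrix.mul_assoc Vᵀ,
      hVV, Matrix.one_mul, hEE]
  have hX0conj : ∀ (A : Matrix (Fin m) (Fin m) ℝ) (dd : Fin m → ℝ),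
      A = V * Matrix.diagonal dd * Vᵀ →
      X0ᵀ * A * X0 = Eᵀ * Matrix.diagonal dd * E := by
    intro A dd hA
    rw [hX0, hA, Matrix.transpose_mul]
    have h1 : Eᵀ * Vᵀ * (V * Matrix.diagonal dd * Vᵀ) * (V * E)
        = Eᵀ * ((Vᵀ * V) * (Matrix.diagonal dd * ((Vᵀ * V) * E))) := by
      simp only [Matrix.mul_assoc]
    rw [h1, hVV, Matrix.one_mul, Matrix.one_mul, ← Matrix.mul_assoc]
  have hX0orth : X0ᵀ *ᵥ one = 0 := by
    rw [hX0, Matrix.transpose_mul, ← Matrix.mulVec_mulVec, hV1]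
    funext k
    simp only [Matrix.mulVec, dotProduct, Matrix.transpose_apply,
      Pi.zero_apply]
    apply Finset.sum_eq_zero
    intro i _
    rw [hEapp]
    by_cases h1 : i = i₀
    · rw [if_neg]
      · ring
      · rw [h1]
        intro hcon
        exact hπne k hcon.symm
    · simp only [he0]
      rw [if_neg h1]
      ring
  -- the two lower bounds
  have hlb1 : ∀ v, (∃ X : Matrix (Fin m) (Fin d) ℝ, Xᵀ * X = 1 ∧
      Xᵀ *ᵥ one = 0 ∧ v = (Xᵀ * Q * X * Matrix.diagonal lam).trace) → B ≤ v := by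
    rintro v ⟨X, hX1, hXo, rfl⟩
    have hYY : (Vᵀ * X)ᵀ * (Vᵀ * X) = 1 := by
      rw [Matrix.transpose_mul, Matrix.transpose_transpose]
      have h1 : Xᵀ * V * (Vᵀ * X) = Xᵀ * ((V * Vᵀ) * X) := by
        simp only [Matrix.mul_assoc]
      rw [h1, hVV', Matrix.one_mul, hX1]
    have hrow : ∀ k, (Vᵀ * X) i₀ k = 0 := by
      intro k
      rw [Matrix.mul_apply]
      have h2 : ∀ j, Vᵀ i₀ j * X j k = -(ε/s) * X j k := by
        intro j
        rw [Matrix.transpose_apply, hVcol]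
      rw [Finset.sum_congr rfl fun j _ => h2 j, ← Finset.mul_sum]
      have h3 : ∑ j, X j k = 0 := by
        have h4 := congrFun hXo k
        simpa [Matrix.mulVec, dotProduct, hone, Matrix.transpose_apply]
          using h4
      rw [h3, mul_zero]
    have hc2 := hcore σ (Vᵀ * X) hYY (fun j _ => rfl) (Or.inl hrow)
    have htr : (Vᵀ * X)ᵀ * Matrix.diagonal σ * (Vᵀ * X) = Xᵀ * Q * X := by
      rw [hQV, Matrix.transpose_mul, Matrix.transpose_transpose]
      simp only [Matrix.mul_assoc]
    rw [htr] at hc2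
    exact hc2
  have hlb2 : ∀ v, (∃ X : Matrix (Fin m) (Fin d) ℝ, Xᵀ * X = 1 ∧
      v = (Xᵀ * (Q + n • Matrix.vecMulVec one one) * X
        * Matrix.diagonal lam).trace) → B ≤ v := by
    rintro v ⟨X, hX1, rfl⟩
    have hYY : (Vᵀ * X)ᵀ * (Vᵀ * X) = 1 := by
      rw [Matrix.transpose_mul, Matrix.transpose_transpose]
      have h1 : Xᵀ * V * (Vᵀ * X) = Xᵀ * ((V * Vᵀ) * X) := by
        simp only [Matrix.mul_assoc]
      rw [h1, hVV', Matrix.one_mul, hX1]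
    have hc2 := hcore D (Vᵀ * X) hYY
      (fun j hj => by simp [hD, hj])
      (Or.inr (fun r => by
        simp only [hD, if_pos]
        exact hσtop (π r)))
    have htr : (Vᵀ * X)ᵀ * Matrix.diagonal D * (Vᵀ * X)
        = Xᵀ * (Q + n • Matrix.vecMulVec one one) * X := by
      rw [hAV, Matrix.transpose_mul, Matrix.transpose_transpose]
      simp only [Matrix.mul_assoc]
    rw [htr] at hc2
    exact hc2
  -- memberships
  have hmem1 : ∃ X : Matrix (Fin m) (Fin d) ℝ, Xᵀ * X = 1 ∧
      Xᵀ *ᵥ one = 0 ∧ B = (Xᵀ * Q * X * Matrix.diagonal lam).trace := by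
    refine ⟨X0, hX0X0, hX0orth, ?_⟩
    rw [hX0conj Q σ hQV, hEdiag, hB]
  have hmem2 : ∃ X : Matrix (Fin m) (Fin d) ℝ, Xᵀ * X = 1 ∧
      B = (Xᵀ * (Q + n • Matrix.vecMulVec one one) * X
        * Matrix.diagonal lam).trace := by
    refine ⟨X0, hX0X0, ?_⟩
    rw [hX0conj _ D hAV, hEdiag, hB]
    refine Finset.sum_congr rfl fun k _ => ?_
    simp [hD, hπne k]
  have e1 : sInf {v : ℝ | ∃ X : Matrix (Fin m) (Fin d) ℝ, Xᵀ * X = 1 ∧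
      Xᵀ *ᵥ one = 0 ∧ v = (Xᵀ * Q * X * Matrix.diagonal lam).trace} = B := by
    apply le_antisymm
    · exact csInf_le ⟨B, fun v hv => hlb1 v hv⟩ hmem1
    · exact le_csInf ⟨B, hmem1⟩ (fun v hv => hlb1 v hv)
  have e2 : sInf {v : ℝ | ∃ X : Matrix (Fin m) (Fin d) ℝ, Xᵀ * X = 1 ∧
      v = (Xᵀ * (Q + n • Matrix.vecMulVec one one) * X
        * Matrix.diagonal lam).trace} = B := by
    apply le_antisymm
    · exact csInf_le ⟨B, fun v hv => hlb2 v hv⟩ hmem2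
    · exact le_csInf ⟨B, hmem2⟩ (fun v hv => hlb2 v hv)
  rw [e1, e2]
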